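/- Let ρ_AB = Σ_{a,b} p(a,b) |a,b⟩⟨a,b| be a classical bipartite state with all marginals p(a) = Σ_b p(a,b) > 0 and p(b) = Σ_a p(a,b) > 0. Define an equivalence relation on the labels b by b ∼ b' iff p(a|b) = p(a|b') for all a, where p(a|b) = p(a,b)/p(b). Then there exist CPTP maps E : B(H_B) → B(H_B̃) and R : B(H_B̃) → B(H_B) with dim H_B̃ = m (the number of equivalence classes) such that (id ⊗ R)∘(id ⊗ E)(ρ_AB) = ρ_AB. -/

import Mathlib

open Matrix
open scoped ComplexOrder

noncomputable def tensorId6 {γ ι κ : Type*}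
    (L : Matrix ι ι ℂ → Matrix κ κ ℂ)
    (M : Matrix (γ × ι) (γ × ι) ℂ) : Matrix (γ × κ) (γ × κ) ℂ :=
  fun p q => L (fun i j => M (p.1, i) (q.1, j)) p.2 q.2

noncomputable def IsCPTP6 {ι κ : Type*} [Fintype ι] [Fintype κ]
    (L : Matrix ι ι ℂ →ₗ[ℂ] Matrix κ κ ℂ) : Prop :=
  (∀ X, (L X).trace = X.trace) ∧
  ∀ (d : ℕ) (M : Matrix (Fin d × ι) (Fin d × ι) ℂ), M.PosSemidef →
    (tensorId6 (fun X => L X) M).PosSemidef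

/-- The equivalence relation b ∼ b' iff the conditional distributions p(·|b), p(·|b')
coincide. -/
def condSetoid {dA dB : ℕ} (p : Fin dA × Fin dB → ℝ) : Setoid (Fin dB) :=
  ⟨fun b b' => ∀ a, p (a, b) / (∑ a', p (a', b)) = p (a, b') / (∑ a', p (a', b')),
    ⟨fun _ _ => rfl, fun h a => (h a).symm, fun h h' a => (h a).trans (h' a)⟩⟩


noncomputable def classChanL {ι κ : Type*} [Fintype ι] [DecidableEq κ]
    (N : ι → κ → ℝ) : Matrix ι ι ℂ →ₗ[ℂ] Matrix κ κ ℂ where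
  toFun X := Matrix.of fun k k' => if k = k' then ∑ i, (N i k : ℂ) * X i i else 0
  map_add' X Y := by
    ext k k'
    by_cases h : k = k' <;> simp [h, mul_add, Finset.sum_add_distrib]
  map_smul' c X := by
    ext k k'
    by_cases h : k = k' <;> simp [h, Finset.mul_sum]
    ring_nf
    exact Finset.sum_congr rfl fun i _ => by ring

lemma classChan_cptp {ι κ : Type*} [Fintype ι] [Fintype κ] [DecidableEq ι] [DecidableEq κ]
    (N : ι → κ → ℝ) (h0 : ∀ i k, 0 ≤ N i k) (h1 : ∀ i, ∑ k, N i k = 1) :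
    IsCPTP6 (classChanL N) := by
  constructor
  · intro X
    simp only [classChanL, LinearMap.coe_mk, AddHom.coe_mk, Matrix.trace, Matrix.diag,
      Matrix.of_apply, if_pos rfl, if_true]
    rw [Finset.sum_comm]
    refine Finset.sum_congr rfl fun i _ => ?_
    rw [← Finset.sum_mul]
    norm_cast
    rw [h1 i, Complex.ofReal_one, one_mul]
  · intro d M hM
    rw [Matrix.posSemidef_iff_dotProduct_mulVec]
    constructor
    · -- Hermitian
      ext ⟨g, k⟩ ⟨g', k'⟩
      simp only [tensorId6, conjTranspose_apply, classChanL, LinearMap.coe_mk, AddHom.coe_mk,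
        Matrix.of_apply]
      by_cases h : k = k'
      · subst h
        simp only [if_pos rfl, if_true, star_sum, star_mul']
        refine Finset.sum_congr rfl fun i _ => ?_
        rw [← hM.1.apply (g, i) (g', i)]
        simp [mul_comm]
      · simp [h, Ne.symm h]
    · intro x
      have key : star x ⬝ᵥ (tensorId6 (fun X => classChanL N X) M) *ᵥ x =
          ∑ i, ∑ k, (N i k : ℂ) *
            (star (fun gj : Fin d × ι => if gj.2 = i then x (gj.1, k) else 0) ⬝ᵥ
              M *ᵥ (fun gj : Fin d × ι => if gj.2 = i then x (gj.1, k) else 0)) := by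
        simp only [dotProduct, mulVec, tensorId6, classChanL, LinearMap.coe_mk, AddHom.coe_mk,
          Matrix.of_apply, Fintype.sum_prod_type, Pi.star_apply]
        simp only [ite_mul, zero_mul, mul_ite, mul_zero, Finset.sum_ite_eq, Finset.mem_univ,
          if_pos, apply_ite star, star_zero, Finset.sum_ite_eq']
        conv_rhs => rw [Finset.sum_comm]
        conv_lhs => rw [Finset.sum_comm]
        refine Finset.sum_congr rfl fun k _ => ?_
        simp only [Finset.mul_sum, Finset.sum_mul]
        conv_rhs => rw [Finset.sum_comm]
        refine Finset.sum_congr rfl fun g _ => ?_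
        conv_rhs => rw [Finset.sum_comm]
        refine Finset.sum_congr rfl fun g' _ => Finset.sum_congr rfl fun i _ => by ring
      rw [key]
      refine Finset.sum_nonneg fun i _ => Finset.sum_nonneg fun k _ => ?_
      exact mul_nonneg (by exact_mod_cast (h0 i k)) (hM.dotProduct_mulVec_nonneg _)

open Classical in
theorem stmt6 {dA dB : ℕ} (p : Fin dA × Fin dB → ℝ)
    (hp : ∀ x, 0 ≤ p x) (hsum : ∑ x, p x = 1)
    (hpa : ∀ a : Fin dA, 0 < ∑ b, p (a, b))
    (hpb : ∀ b : Fin dB, 0 < ∑ a, p (a, b))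
    (ρAB : Matrix (Fin dA × Fin dB) (Fin dA × Fin dB) ℂ)
    (hρAB : ρAB = Matrix.diagonal (fun x => (p x : ℂ)))
    (m : ℕ) (hm : m = Fintype.card (Quotient (condSetoid p))) :
    ∃ (E : Matrix (Fin dB) (Fin dB) ℂ →ₗ[ℂ] Matrix (Fin m) (Fin m) ℂ)
      (R : Matrix (Fin m) (Fin m) ℂ →ₗ[ℂ] Matrix (Fin dB) (Fin dB) ℂ),
      IsCPTP6 E ∧ IsCPTP6 R ∧
        tensorId6 (fun X => R X) (tensorId6 (fun X => E X) ρAB) = ρAB := by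
  subst hρAB
  subst hm
  classical
  set Q := Quotient (condSetoid p) with hQ
  let e : Q ≃ Fin (Fintype.card Q) := Fintype.equivFin Q
  set f : Fin dB → Fin (Fintype.card Q) := fun b => e (Quotient.mk (condSetoid p) b) with hf
  set pB : Fin dB → ℝ := fun b => ∑ a, p (a, b) with hpB
  set P : Fin (Fintype.card Q) → ℝ := fun c => ∑ b, if f b = c then pB b else 0 with hPdef
  have hfsurj : ∀ c, ∃ b, f b = c := by
    intro c
    obtain ⟨q, hq⟩ := e.surjective c
    obtain ⟨b, hb⟩ := Quotient.exists_rep q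
    exact ⟨b, by simp [hf, hb, hq]⟩
  have hpBpos : ∀ b, 0 < pB b := hpb
  have hPpos : ∀ c, 0 < P c := by
    intro c
    obtain ⟨b, hb⟩ := hfsurj c
    refine Finset.sum_pos' (fun b' _ => ?_) ⟨b, Finset.mem_univ b, ?_⟩
    · split
      · exact (hpBpos _).le
      · exact le_rfl
    · rw [if_pos hb]; exact hpBpos b
  have hfrel : ∀ b1 b2 : Fin dB, f b1 = f b2 →
      ∀ a, p (a, b1) / pB b1 = p (a, b2) / pB b2 := by
    intro b1 b2 h
    have : Quotient.mk (condSetoid p) b1 = Quotient.mk (condSetoid p) b2 := e.injective h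
    exact Quotient.exact this
  set NE : Fin dB → Fin (Fintype.card Q) → ℝ := fun b c => if f b = c then 1 else 0 with hNE
  set NR : Fin (Fintype.card Q) → Fin dB → ℝ := fun c b => if f b = c then pB b / P c else 0
    with hNR
  refine ⟨classChanL NE, classChanL NR, ?_, ?_, ?_⟩
  · exact classChan_cptp NE (fun b c => by simp [hNE]; split <;> norm_num)
      (fun b => by simp [hNE])
  · refine classChan_cptp NR (fun c b => by
      simp only [hNR]
      split
      · exact div_nonneg (hpBpos _).le (hPpos _).le
      · exact le_rfl) (fun c => ?_)
    have : ∑ b, NR c b = (∑ b, if f b = c then pB b else 0) / P c := by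
      rw [Finset.sum_div]
      refine Finset.sum_congr rfl fun b _ => ?_
      simp only [hNR]
      split <;> simp
    rw [this]
    show P c / P c = 1
    exact div_self (hPpos c).ne'
  · ext ⟨a, b⟩ ⟨a', b'⟩
    simp only [tensorId6, classChanL, LinearMap.coe_mk, AddHom.coe_mk, Matrix.of_apply,
      Matrix.diagonal_apply]
    by_cases hb : b = b'
    · subst hb
      by_cases ha : a = a'
      · subst ha
        simp only [if_pos rfl, Prod.mk.injEq, and_true, true_and]
        have hreal : ∑ c, NR c b * ∑ b'', NE b'' c * p (a, b'') = p (a, b) := by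
          have h1 : ∀ c, (if f b = c then pB b / P c else 0) *
              (∑ b'', NE b'' c * p (a, b'')) =
              if f b = c then (pB b / P c) * ∑ b'', NE b'' c * p (a, b'') else 0 := by
            intro c; split <;> simp
          simp only [hNR, h1]
          rw [Finset.sum_ite_eq, if_pos (Finset.mem_univ _)]
          have h2 : ∑ b'', NE b'' (f b) * p (a, b'') =
              (p (a, b) / pB b) * P (f b) := by
            rw [hPdef, Finset.mul_sum]
            refine Finset.sum_congr rfl fun b'' _ => ?_
            simp only [hNE]
            by_cases h : f b'' = f b
            · rw [if_pos h, if_pos h, one_mul]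
              have hrel := hfrel b'' b h a
              rw [← hrel, div_mul_cancel₀ _ (hpBpos b'').ne']
            · rw [if_neg h, if_neg h, zero_mul, mul_zero]
          rw [h2]
          have h3 := (hpBpos b).ne'
          have h4 := (hPpos (f b)).ne'
          field_simp
        rw [← hreal]
        push_cast
        rfl
      · simp only [Prod.mk.injEq, ha, false_and, and_false, if_false, if_pos rfl]
        rw [show (0 : ℂ) = ∑ c : Fin (Fintype.card Q), 0 by simp]
        refine Finset.sum_congr rfl fun c _ => ?_
        rw [show (0:ℂ) = (NR c b : ℂ) * 0 by ring]
        congr 1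
        rw [show (0 : ℂ) = ∑ b'' : Fin dB, 0 by simp]
        refine Finset.sum_congr rfl fun b'' _ => by simp [ha]
    · simp [Prod.mk.injEq, hb]
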